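/- Suppose the nonnegative 3×3 channel strength matrix α satisfies conditions (C1) and (C2), that α_{12} = max_{l≠m} α_{lm}, and that max(α_{13}, α_{31}) ≤ α_{23}. Then D = D̂_{213}. -/

import Mathlib

/-- `δ_i = max_m α_{im}`. -/
noncomputable def deltaI (α : Fin 3 → Fin 3 → ℝ) (i : Fin 3) : ℝ :=
  ⨆ m : Fin 3, α i m

/-- `δ_{i,j} = max_m (α_{im} − α_{jm})⁺`. -/
noncomputable def deltaIJ (α : Fin 3 → Fin 3 → ℝ) (i j : Fin 3) : ℝ :=
  ⨆ m : Fin 3, max (α i m - α j m) 0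

/-- `δ`: the minimum over all orderings `(i,j,k)` of `{1,2,3}` of
`min(δ_i + δ_{j,i} + δ_{k,j}, (δ_i + δ_k + δ_{i,j} + δ_{j,i} + δ_{j,k} + δ_{k,i})/2)`. -/
noncomputable def deltaTot (α : Fin 3 → Fin 3 → ℝ) : ℝ :=
  ⨅ p : Equiv.Perm (Fin 3),
    min (deltaI α (p 0) + deltaIJ α (p 1) (p 0) + deltaIJ α (p 2) (p 1))
      ((deltaI α (p 0) + deltaI α (p 2) + deltaIJ α (p 0) (p 1) +
        deltaIJ α (p 1) (p 0) + deltaIJ α (p 1) (p 2) + deltaIJ α (p 2) (p 0)) / 2)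

/-- The GDoF region `D`. -/
noncomputable def Dregion (α : Fin 3 → Fin 3 → ℝ) : Set (Fin 3 → ℝ) :=
  { d | (∀ i : Fin 3, 0 ≤ d i ∧ d i ≤ deltaI α i) ∧
        (∀ i k : Fin 3, i ≠ k →
          d i + d k ≤ min (deltaI α i + deltaIJ α k i) (deltaI α k + deltaIJ α i k)) ∧
        d 0 + d 1 + d 2 ≤ deltaTot α }

/-- Condition (C1): `max(α_{im}, α_{ki}) ≤ α_{ii}`. -/
def CondC1 (α : Fin 3 → Fin 3 → ℝ) : Prop :=
  ∀ i k m : Fin 3, max (α i m) (α k i) ≤ α i i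

/-- Condition (C2): `α_{ki} + α_{im} ≤ α_{ii} + α_{km}`. -/
def CondC2 (α : Fin 3 → Fin 3 → ℝ) : Prop :=
  ∀ i k m : Fin 3, α k i + α i m ≤ α i i + α k m

/-- `max_{l≠m} α_{lm}`: the largest cross-channel strength. -/
noncomputable def maxCross (α : Fin 3 → Fin 3 → ℝ) : ℝ :=
  max (α 0 1) (max (α 0 2) (max (α 1 0) (max (α 1 2) (max (α 2 0) (α 2 1)))))

/-- The region `D̂_{ijk}` for an ordering `(i,j,k)` of the three users
(defined to be empty unless `max_{l≠m} α_{lm} ≤ min(α_{ii}, α_{jj})`). -/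
noncomputable def Dhat (α : Fin 3 → Fin 3 → ℝ) (i j k : Fin 3) : Set (Fin 3 → ℝ) :=
  if maxCross α ≤ min (α i i) (α j j) then
    { d | 0 ≤ d 0 ∧ 0 ≤ d 1 ∧ 0 ≤ d 2 ∧
          d 0 ≤ α 0 0 ∧ d 1 ≤ α 1 1 ∧ d 2 ≤ α 2 2 ∧
          d i + d j ≤ α i i + α j j - maxCross α ∧
          d i + d k ≤ α i i + α k k - max (α j k) (max (α k j) (max (α k i) (α i k))) ∧
          d j + d k ≤ α j j + α k k - max (α j k) (α k j) ∧
          d 0 + d 1 + d 2 ≤ α 0 0 + α 1 1 + α 2 2 -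
            max (maxCross α + max (α j k) (α k j))
              (max (α i k + α k i) (max (α k i + α i j) (α j i + α i k))) }
  else ∅

/-- The region `F̂_{ijk}` for an ordering `(i,j,k)` of the three users
(defined to be empty unless `max_{l≠m} α_{lm} ≤ min(α_{ii}, α_{jj})`). -/
noncomputable def Fhat (α : Fin 3 → Fin 3 → ℝ) (i j k : Fin 3) : Set (Fin 3 → ℝ) :=
  if maxCross α ≤ min (α i i) (α j j) then
    { d | 0 ≤ d 0 ∧ 0 ≤ d 1 ∧ 0 ≤ d 2 ∧
          d 0 ≤ α 0 0 ∧ d 1 ≤ α 1 1 ∧ d 2 ≤ α 2 2 ∧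
          d i + d j ≤ α i i + α j j - maxCross α ∧
          d i + d k ≤ α i i + α k k - max (α j k) (max (α k i) (α i k)) ∧
          d j + d k ≤ α j j + α k k - max (α j k) (max (α k i) (α k j)) ∧
          d 0 + d 1 + d 2 ≤ α 0 0 + α 1 1 + α 2 2 -
            max (maxCross α + max (α k i) (α j k))
              (max (α i k + α j i) (max (α k j + α j i)
                (max (α k j + α i k) ((α i j + α i k + α k j + α j i) / 2)))) }
  else ∅

lemma dI (α : Fin 3 → Fin 3 → ℝ) (h1 : CondC1 α) (i : Fin 3) : deltaI α i = α i i := by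
  refine le_antisymm (ciSup_le fun m => (le_max_left _ _).trans (h1 i i m)) ?_
  exact le_ciSup (Set.Finite.bddAbove (Set.finite_range _)) i

lemma dIJ (α : Fin 3 → Fin 3 → ℝ) (h1 : CondC1 α) (h2 : CondC2 α) (i j : Fin 3) :
    deltaIJ α i j = α i i - α j i := by
  refine le_antisymm (ciSup_le fun m => max_le (by linarith [h2 i j m]) ?_) ?_
  · have := (le_max_right (α i i) (α j i)).trans (h1 i j i); linarith
  · exact le_trans (le_max_left _ _)
      (le_ciSup (f := fun m => max (α i m - α j m) 0)
        (Set.Finite.bddAbove (Set.finite_range _)) i)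

/-- If `α₁₂` is the largest cross link and `max(α₁₃, α₃₁) ≤ α₂₃`, then under
(C1),(C2) the GDoF region `D` equals `D̂₂₁₃`. -/
theorem Dregion_eq_Dhat213 (α : Fin 3 → Fin 3 → ℝ)
    (hα : ∀ i m : Fin 3, 0 ≤ α i m) (h1 : CondC1 α) (h2 : CondC2 α)
    (hmax : α 0 1 = maxCross α) (hcase : max (α 0 2) (α 2 0) ≤ α 1 2) :
    Dregion α = Dhat α 1 0 2 := by
  have c1 : ∀ i m : Fin 3, α i m ≤ α i i := fun i m => (le_max_left _ _).trans (h1 i i m)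
  have c1' : ∀ i k : Fin 3, α k i ≤ α i i := fun i k => (le_max_right _ _).trans (h1 i k i)
  have hx02 : α 0 2 ≤ α 0 1 := by rw [hmax]; unfold maxCross; simp [le_max_iff]
  have hx10 : α 1 0 ≤ α 0 1 := by rw [hmax]; unfold maxCross; simp [le_max_iff]
  have hx12 : α 1 2 ≤ α 0 1 := by rw [hmax]; unfold maxCross; simp [le_max_iff]
  have hx20 : α 2 0 ≤ α 0 1 := by rw [hmax]; unfold maxCross; simp [le_max_iff]
  have hx21 : α 2 1 ≤ α 0 1 := by rw [hmax]; unfold maxCross; simp [le_max_iff]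
  have hc1 : α 0 2 ≤ α 1 2 := le_trans (le_max_left _ _) hcase
  have hc2 : α 2 0 ≤ α 1 2 := le_trans (le_max_right _ _) hcase
  have hcond : maxCross α ≤ min (α 1 1) (α 0 0) := by
    rw [← hmax]; exact le_min (c1' 1 0) (c1 0 1)
  ext d
  simp only [Dregion, Set.mem_setOf_eq, Dhat, if_pos hcond]
  rw [← hmax]
  constructor
  · rintro ⟨hbox, hpair, hsum⟩
    have b0 := hbox 0; have b1 := hbox 1; have b2 := hbox 2
    simp only [dI α h1] at b0 b1 b2
    have p10 := hpair 1 0 (by decide)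
    have p12 := hpair 1 2 (by decide)
    have p02 := hpair 0 2 (by decide)
    simp only [dI α h1, dIJ α h1 h2, le_min_iff] at p10 p12 p02
    -- two instances of the infimum
    unfold deltaTot at hsum
    have hbdd : BddBelow (Set.range fun p : Equiv.Perm (Fin 3) =>
        min (deltaI α (p 0) + deltaIJ α (p 1) (p 0) + deltaIJ α (p 2) (p 1))
          ((deltaI α (p 0) + deltaI α (p 2) + deltaIJ α (p 0) (p 1) +
            deltaIJ α (p 1) (p 0) + deltaIJ α (p 1) (p 2) + deltaIJ α (p 2) (p 0)) / 2)) :=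
      Set.Finite.bddBelow (Set.finite_range _)
    have e1 := hsum.trans (ciInf_le hbdd (Equiv.refl (Fin 3)))
    have rev : Equiv.Perm (Fin 3) := ⟨fun x => 2 - x, fun x => 2 - x, by decide, by decide⟩
    have e2 := hsum.trans (ciInf_le hbdd
      (⟨fun x => 2 - x, fun x => 2 - x, by decide, by decide⟩ : Equiv.Perm (Fin 3)))
    simp only [Equiv.refl_apply, Equiv.coe_fn_mk, dI α h1, dIJ α h1 h2, le_min_iff] at e1 e2
    norm_num at e2
    simp only [show (2 - 1 : Fin 3) = 1 by decide] at e2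
    have e1A := e1.1
    have e2A := e2.1
    refine ⟨b0.1, b1.1, b2.1, b0.2, b1.2, b2.2, by linarith [p10.2], ?_, ?_, ?_⟩
    · rw [le_sub_comm]
      exact max_le (by linarith [p12.1]) (max_le (by linarith [p12.2])
        (max_le (by linarith [p12.2]) (by linarith [p12.1])))
    · rw [le_sub_comm]
      exact max_le (by linarith [p02.1]) (by linarith [p02.2])
    · rw [le_sub_comm]
      refine max_le (by linarith [hcase]) (max_le (by linarith) (max_le (by linarith) (by linarith)))
  · rintro ⟨g0, g1, g2, g3, g4, g5, g6, g7, g8, g9⟩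
    rw [le_sub_comm, max_le_iff, max_le_iff, max_le_iff] at g7
    obtain ⟨g7a, g7b, g7c, g7d⟩ := g7
    rw [le_sub_comm, max_le_iff] at g8
    obtain ⟨g8a, g8b⟩ := g8
    rw [le_sub_comm, max_le_iff, max_le_iff, max_le_iff] at g9
    obtain ⟨G1, G2, G3, G4⟩ := g9
    have hmx1 : α 0 2 ≤ max (α 0 2) (α 2 0) := le_max_left _ _
    have hmx2 : α 2 0 ≤ max (α 0 2) (α 2 0) := le_max_right _ _
    refine ⟨?_, ?_, ?_⟩
    · intro i; fin_cases i <;> simp only [dI α h1] <;> exact ⟨by assumption, by assumption⟩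
    · have pairs : ∀ i k : Fin 3, i ≠ k → (i=0∧k=1)∨(i=0∧k=2)∨(i=1∧k=0)∨(i=1∧k=2)∨(i=2∧k=0)∨(i=2∧k=1) := by decide
      intro i k hik
      rcases pairs i k hik with ⟨h,h'⟩|⟨h,h'⟩|⟨h,h'⟩|⟨h,h'⟩|⟨h,h'⟩|⟨h,h'⟩ <;> subst h <;> subst h' <;>
        (simp only [dI α h1, dIJ α h1 h2, le_min_iff]; constructor <;> linarith)
    · unfold deltaTot
      refine le_ciInf fun p => ?_
      have h01 : p 0 ≠ p 1 := fun h => absurd (p.injective h) (by decide)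
      have h02 : p 0 ≠ p 2 := fun h => absurd (p.injective h) (by decide)
      have h12 : p 1 ≠ p 2 := fun h => absurd (p.injective h) (by decide)
      have perms : ∀ a b c : Fin 3, a≠b → a≠c → b≠c →
          (a=0∧b=1∧c=2)∨(a=0∧b=2∧c=1)∨(a=1∧b=0∧c=2)∨(a=1∧b=2∧c=0)∨(a=2∧b=0∧c=1)∨(a=2∧b=1∧c=0) := by
        decide
      rcases perms (p 0) (p 1) (p 2) h01 h02 h12 with
          ⟨ha,hb,hc⟩|⟨ha,hb,hc⟩|⟨ha,hb,hc⟩|⟨ha,hb,hc⟩|⟨ha,hb,hc⟩|⟨ha,hb,hc⟩ <;>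
        (simp only [ha, hb, hc, dI α h1, dIJ α h1 h2, le_min_iff]; constructor <;> linarith)
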